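/- Let J be a nonzero real d×d matrix and G(J) the topological group with underlying space ℝ^d × ℝ and multiplication (v,t)·(u,s) = (v + exp(t·J)·u, t+s). Let N be a discrete normal subgroup of G(J), and let H be a subgroup of G(J) of one of the two forms: H = {(w,0) : w ∈ W} for a linear subspace W ⊆ ℝ^d, or H = {(w + t·S(t·J)·v₀, t) : w ∈ W, t ∈ ℝ} for a linear subspace W ⊆ ℝ^d with J·W ⊆ W and some v₀ ∈ ℝ^d, where S(A) = Σ_{n≥0} Aⁿ/(n+1)!. Then there exists a subgroup B of N such that N is the internal direct product of N ∩ H and B: every element of N can be written uniquely as a product of an element of N ∩ H and an element of B (equivalently, (N ∩ H) ∩ B is trivial and (N ∩ H)·B = N). -/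

import Mathlib

open scoped Matrix
open NormedSpace

noncomputable section

/-- `S(A) = ∑_{n ≥ 0} Aⁿ/(n+1)!`, the power series with `A * S(A) = exp A - 1`. -/
def matS {d : ℕ} (A : Matrix (Fin d) (Fin d) ℝ) : Matrix (Fin d) (Fin d) ℝ :=
  ∑' n : ℕ, (((n + 1).factorial : ℝ))⁻¹ • A ^ n

/-- The almost Abelian group `G(J) = ℝ^d ⋊ ℝ` with multiplication
`(v,t)·(u,s) = (v + exp(tJ)u, t+s)`. -/
@[ext] structure GJ (d : ℕ) (J : Matrix (Fin d) (Fin d) ℝ) where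
  v : Fin d → ℝ
  t : ℝ

namespace GJ

variable {d : ℕ} {J : Matrix (Fin d) (Fin d) ℝ}

lemma exp_smul_add (a b : ℝ) (J : Matrix (Fin d) (Fin d) ℝ) :
    exp ((a + b) • J) = exp (a • J) * exp (b • J) := by
  rw [add_smul]
  exact Matrix.exp_add_of_commute _ _ (((Commute.refl J).smul_left a).smul_right b)

instance : Group (GJ d J) where
  mul p q := ⟨p.v + (exp (p.t • J)).mulVec q.v, p.t + q.t⟩
  one := ⟨0, 0⟩
  inv p := ⟨-(exp ((-p.t) • J)).mulVec p.v, -p.t⟩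
  mul_assoc a b c := by
    ext i
    · show (a.v + (exp (a.t • J)).mulVec b.v + (exp ((a.t + b.t) • J)).mulVec c.v) i = _
      show _ = (a.v + (exp (a.t • J)).mulVec (b.v + (exp (b.t • J)).mulVec c.v)) i
      rw [exp_smul_add, ← Matrix.mulVec_mulVec, Matrix.mulVec_add, add_assoc]
    · exact add_assoc a.t b.t c.t
  one_mul a := by
    ext i
    · show ((0 : Fin d → ℝ) + (exp ((0 : ℝ) • J)).mulVec a.v) i = a.v i
      rw [zero_smul, exp_zero, Matrix.one_mulVec, zero_add]
    · exact zero_add a.t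
  mul_one a := by
    ext i
    · show (a.v + (exp (a.t • J)).mulVec 0) i = a.v i
      rw [Matrix.mulVec_zero, add_zero]
    · exact add_zero a.t
  inv_mul_cancel a := by
    ext i
    · show (-(exp ((-a.t) • J)).mulVec a.v + (exp ((-a.t) • J)).mulVec a.v) i
        = (0 : Fin d → ℝ) i
      rw [neg_add_cancel]
    · exact neg_add_cancel a.t

/-- The topology of `G(J)` is that of the underlying space `ℝ^d × ℝ`. -/
instance : TopologicalSpace (GJ d J) :=
  TopologicalSpace.induced (fun g => (g.v, g.t)) inferInstance

lemma mul_def (p q : GJ d J) :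
    p * q = ⟨p.v + (exp (p.t • J)).mulVec q.v, p.t + q.t⟩ := rfl

end GJ

namespace GJ

variable {d : ℕ} {J : Matrix (Fin d) (Fin d) ℝ}

lemma one_def : (1 : GJ d J) = ⟨0, 0⟩ := rfl

lemma inv_def (p : GJ d J) :
    p⁻¹ = ⟨-(exp ((-p.t) • J)).mulVec p.v, -p.t⟩ := rfl

lemma mul_t (p q : GJ d J) : (p * q).t = p.t + q.t := rfl

lemma injective_vt : Function.Injective (fun g : GJ d J => (g.v, g.t)) := by
  intro a b h
  ext i
  · exact congrFun (congrArg Prod.fst h) i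
  · exact congrArg Prod.snd h

lemma exp_zero_smul : exp ((0 : ℝ) • J) = 1 := by rw [zero_smul, exp_zero]

lemma exp_neg_smul_mul (t : ℝ) : exp ((-t) • J) * exp (t • J) = 1 := by
  rw [← exp_smul_add, neg_add_cancel, exp_zero_smul]

lemma exp_neg_smul_eq_one {t : ℝ} (h : exp (t • J) = 1) : exp ((-t) • J) = 1 := by
  have h2 := exp_neg_smul_mul (J := J) t
  rwa [h, mul_one] at h2

lemma continuous_exp_smul : Continuous fun s : ℝ => exp (s • J) := by
  letI : SeminormedRing (Matrix (Fin d) (Fin d) ℝ) := Matrix.linftyOpSemiNormedRing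
  letI : NormedRing (Matrix (Fin d) (Fin d) ℝ) := Matrix.linftyOpNormedRing
  letI : NormedAlgebra ℝ (Matrix (Fin d) (Fin d) ℝ) := Matrix.linftyOpNormedAlgebra
  letI : NormedAlgebra ℚ (Matrix (Fin d) (Fin d) ℝ) := NormedAlgebra.restrictScalars ℚ ℝ _
  exact exp_continuous.comp (continuous_id.smul continuous_const)

lemma continuous_mk {X : Type*} [TopologicalSpace X] {f : X → Fin d → ℝ} {g : X → ℝ}
    (hf : Continuous f) (hg : Continuous g) :
    Continuous fun x => (⟨f x, g x⟩ : GJ d J) :=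
  continuous_induced_rng.2 (hf.prodMk hg)

instance : ConnectedSpace (GJ d J) := by
  have hsurj : Function.Surjective (fun p : (Fin d → ℝ) × ℝ => (⟨p.1, p.2⟩ : GJ d J)) :=
    fun g => ⟨(g.v, g.t), rfl⟩
  exact hsurj.connectedSpace (continuous_mk continuous_fst continuous_snd)

section Central

variable {N : Subgroup (GJ d J)}

lemma conj_eq_self (hnorm : N.Normal) (hdisc : DiscreteTopology N) {n : GJ d J}
    (hn : n ∈ N) (g : GJ d J) : g * n * g⁻¹ = n := by
  have hmem : ∀ p : (Fin d → ℝ) × ℝ,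
      (⟨p.1, p.2⟩ : GJ d J) * n * (⟨p.1, p.2⟩ : GJ d J)⁻¹ ∈ N :=
    fun p => hnorm.conj_mem n hn _
  let f : (Fin d → ℝ) × ℝ → N := fun p => ⟨_, hmem p⟩
  have hc : Continuous fun p : (Fin d → ℝ) × ℝ =>
      (⟨p.1, p.2⟩ : GJ d J) * n * (⟨p.1, p.2⟩ : GJ d J)⁻¹ := by
    show Continuous fun p : (Fin d → ℝ) × ℝ =>
      (⟨p.1 + (exp (p.2 • J)).mulVec n.v +
        (exp ((p.2 + n.t) • J)).mulVec (-((exp ((-p.2) • J)).mulVec p.1)),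
        p.2 + n.t + -p.2⟩ : GJ d J)
    apply continuous_mk
    · refine Continuous.add (Continuous.add continuous_fst ?_) ?_
      · exact (continuous_exp_smul.comp continuous_snd).matrix_mulVec continuous_const
      · exact ((continuous_exp_smul.comp (continuous_snd.add continuous_const))).matrix_mulVec
          (((continuous_exp_smul.comp continuous_snd.neg)).matrix_mulVec continuous_fst).neg
    · exact (continuous_snd.add continuous_const).add continuous_snd.neg
  have hf : Continuous f := hc.subtype_mk _
  have h0 : f (g.v, g.t) = f (0, 0) := PreconnectedSpace.constant inferInstance hf
  have h1 : g * n * g⁻¹ = (⟨0, 0⟩ : GJ d J) * n * (⟨0, 0⟩ : GJ d J)⁻¹ :=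
    congrArg Subtype.val h0
  rw [h1, show (⟨0, 0⟩ : GJ d J) = 1 from rfl, one_mul, inv_one, mul_one]

lemma exp_t_eq_one (hnorm : N.Normal) (hdisc : DiscreteTopology N) {n : GJ d J}
    (hn : n ∈ N) : exp (n.t • J) = 1 := by
  have key : ∀ u : Fin d → ℝ, (exp (n.t • J)).mulVec u = u := by
    intro u
    have h := conj_eq_self hnorm hdisc hn ⟨u, 0⟩
    have hv : u + (exp ((0 : ℝ) • J)).mulVec n.v +
        (exp (((0 : ℝ) + n.t) • J)).mulVec (-((exp ((-(0 : ℝ)) • J)).mulVec u)) = n.v :=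
      congrArg GJ.v h
    rw [exp_zero_smul, Matrix.one_mulVec, neg_zero, exp_zero_smul, Matrix.one_mulVec,
      zero_add, Matrix.mulVec_neg] at hv
    have : (exp (n.t • J)).mulVec u = u := by linear_combination -hv
    exact this
  ext i j
  have hk := congrFun (key (Pi.single j 1)) i
  rw [Matrix.mulVec_single] at hk
  simpa [Matrix.one_apply, Pi.single_apply] using hk

lemma exp_smul_mulVec_v (hnorm : N.Normal) (hdisc : DiscreteTopology N) {n : GJ d J}
    (hn : n ∈ N) (s : ℝ) : (exp (s • J)).mulVec n.v = n.v := by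
  have h := conj_eq_self hnorm hdisc hn ⟨0, s⟩
  have hv : (0 : Fin d → ℝ) + (exp (s • J)).mulVec n.v +
      (exp ((s + n.t) • J)).mulVec (-((exp ((-s) • J)).mulVec 0)) = n.v :=
    congrArg GJ.v h
  simpa [Matrix.mulVec_zero] using hv

lemma central_comm (hnorm : N.Normal) (hdisc : DiscreteTopology N) {n : GJ d J}
    (hn : n ∈ N) (g : GJ d J) : n * g = g * n := by
  ext i
  · show (n.v + (exp (n.t • J)).mulVec g.v) i = (g.v + (exp (g.t • J)).mulVec n.v) i
    rw [exp_t_eq_one hnorm hdisc hn, Matrix.one_mulVec,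
      exp_smul_mulVec_v hnorm hdisc hn g.t, add_comm]
  · exact add_comm n.t g.t

lemma mul_v_mem (hnorm : N.Normal) (hdisc : DiscreteTopology N) {n : GJ d J}
    (hn : n ∈ N) (m : GJ d J) : (n * m).v = n.v + m.v := by
  show n.v + (exp (n.t • J)).mulVec m.v = n.v + m.v
  rw [exp_t_eq_one hnorm hdisc hn, Matrix.one_mulVec]

lemma inv_v_mem (hnorm : N.Normal) (hdisc : DiscreteTopology N) {n : GJ d J}
    (hn : n ∈ N) : (n⁻¹).v = -n.v := by
  show -(exp ((-n.t) • J)).mulVec n.v = -n.v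
  rw [exp_neg_smul_eq_one (exp_t_eq_one hnorm hdisc hn), Matrix.one_mulVec]

lemma pow_vt_mem (hnorm : N.Normal) (hdisc : DiscreteTopology N) {n : GJ d J}
    (hn : n ∈ N) : ∀ k : ℕ, (n ^ k).v = k • n.v ∧ (n ^ k).t = k • n.t := by
  intro k
  induction k with
  | zero => exact ⟨by simp [pow_zero, one_def], by simp [pow_zero, one_def]⟩
  | succ k ih =>
    rw [pow_succ]
    constructor
    · rw [show (n ^ k * n).v = (n ^ k).v + n.v from
        mul_v_mem hnorm hdisc (N.pow_mem hn k) n, ih.1, succ_nsmul]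
    · rw [mul_t, ih.2, succ_nsmul]

lemma zpow_vt_mem (hnorm : N.Normal) (hdisc : DiscreteTopology N) {n : GJ d J}
    (hn : n ∈ N) (k : ℤ) : (n ^ k).v = k • n.v ∧ (n ^ k).t = k • n.t := by
  obtain ⟨j, rfl | rfl⟩ := k.eq_nat_or_neg
  · rw [zpow_natCast]
    refine ⟨?_, ?_⟩
    · rw [(pow_vt_mem hnorm hdisc hn j).1, natCast_zsmul]
    · rw [(pow_vt_mem hnorm hdisc hn j).2, natCast_zsmul]
  · rw [zpow_neg, zpow_natCast]
    refine ⟨?_, ?_⟩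
    · rw [inv_v_mem hnorm hdisc (N.pow_mem hn j), (pow_vt_mem hnorm hdisc hn j).1,
        neg_smul, natCast_zsmul]
    · show -((n ^ j).t) = _
      rw [(pow_vt_mem hnorm hdisc hn j).2, neg_smul, natCast_zsmul]

lemma pow_vt_t_zero {m : GJ d J} (hm : m.t = 0) :
    ∀ k : ℕ, (m ^ k).v = k • m.v ∧ (m ^ k).t = 0 := by
  intro k
  induction k with
  | zero => exact ⟨by simp [pow_zero, one_def], by simp [pow_zero, one_def]⟩
  | succ k ih =>
    rw [pow_succ]
    constructor
    · show (m ^ k).v + (exp ((m ^ k).t • J)).mulVec m.v = _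
      rw [ih.2, exp_zero_smul, Matrix.one_mulVec, ih.1, succ_nsmul]
    · rw [mul_t, ih.2, hm, add_zero]

lemma purity (hnorm : N.Normal) (hdisc : DiscreteTopology N) {H : Subgroup (GJ d J)}
    (hH : (∃ W : Submodule ℝ (Fin d → ℝ),
        (H : Set (GJ d J)) = {g : GJ d J | g.v ∈ W ∧ g.t = 0}) ∨
      (∃ W : Submodule ℝ (Fin d → ℝ), (∀ w ∈ W, J.mulVec w ∈ W) ∧ ∃ v₀ : Fin d → ℝ,
        (H : Set (GJ d J)) =
          {g : GJ d J | ∃ w ∈ W, ∃ t : ℝ, g = ⟨w + t • (matS (t • J)).mulVec v₀, t⟩}))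
    {n : GJ d J} (hn : n ∈ N) {k : ℕ} (hk : k ≠ 0) (hnk : n ^ k ∈ H) : n ∈ H := by
  have hk' : (k : ℝ) ≠ 0 := Nat.cast_ne_zero.2 hk
  rcases hH with ⟨W, hW⟩ | ⟨W, hJW, v₀, hW⟩
  · have hmem : ∀ g : GJ d J, g ∈ H ↔ g.v ∈ W ∧ g.t = 0 := fun g => by
      rw [← SetLike.mem_coe, hW]; exact Iff.rfl
    obtain ⟨hv, ht⟩ := (hmem _).1 hnk
    rw [(pow_vt_mem hnorm hdisc hn k).1] at hv
    rw [(pow_vt_mem hnorm hdisc hn k).2] at ht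
    have hnt : n.t = 0 := by
      have h2 : (k : ℝ) * n.t = 0 := by rw [← nsmul_eq_mul]; exact ht
      rcases mul_eq_zero.1 h2 with h | h
      · exact absurd h hk'
      · exact h
    have hnv : n.v ∈ W := by
      have h1 : (k : ℝ) • n.v ∈ W := by rw [Nat.cast_smul_eq_nsmul]; exact hv
      have h2 := W.smul_mem ((k : ℝ))⁻¹ h1
      rwa [inv_smul_smul₀ hk'] at h2
    exact (hmem n).2 ⟨hnv, hnt⟩
  · have hmem : ∀ g : GJ d J, g ∈ H ↔
        ∃ w ∈ W, ∃ t : ℝ, g = ⟨w + t • (matS (t • J)).mulVec v₀, t⟩ := fun g => by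
      rw [← SetLike.mem_coe, hW]; exact Iff.rfl
    set h : GJ d J := ⟨n.t • (matS (n.t • J)).mulVec v₀, n.t⟩ with hhdef
    have hhH : h ∈ H := (hmem h).2 ⟨0, W.zero_mem, n.t, by
      ext i
      · show (n.t • (matS (n.t • J)).mulVec v₀) i = ((0 : Fin d → ℝ) + _) i
        rw [zero_add]
      · rfl⟩
    set m : GJ d J := n * h⁻¹ with hmdef
    have hmt : m.t = 0 := by
      show n.t + -h.t = 0
      rw [hhdef]
      exact add_neg_cancel n.t
    have hcomm : Commute n h⁻¹ := central_comm hnorm hdisc hn h⁻¹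
    have hmk : m ^ k ∈ H := by
      rw [hmdef, hcomm.mul_pow]
      exact H.mul_mem hnk (H.pow_mem (H.inv_mem hhH) k)
    obtain ⟨w, hwW, s, hs⟩ := (hmem _).1 hmk
    have hst : s = 0 := by
      have h2 : (m ^ k).t = s := congrArg GJ.t hs
      rw [(pow_vt_t_zero hmt k).2] at h2
      exact h2.symm
    subst hst
    have hmkv : k • m.v = w := by
      have h2 := congrArg GJ.v hs
      rw [(pow_vt_t_zero hmt k).1] at h2
      rw [h2]
      simp
    have hmvW : m.v ∈ W := by
      have h1 : (k : ℝ) • m.v ∈ W := by rw [Nat.cast_smul_eq_nsmul, hmkv]; exact hwW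
      have h2 := W.smul_mem ((k : ℝ))⁻¹ h1
      rwa [inv_smul_smul₀ hk'] at h2
    have hn_eq : n = m * h := by rw [hmdef, inv_mul_cancel_right]
    refine (hmem n).2 ⟨m.v, hmvW, n.t, ?_⟩
    conv_lhs => rw [hn_eq]
    ext i
    · show (m.v + (exp (m.t • J)).mulVec h.v) i
        = (m.v + n.t • (matS (n.t • J)).mulVec v₀) i
      rw [hmt, exp_zero_smul, Matrix.one_mulVec]
    · show m.t + h.t = n.t
      rw [hmt, zero_add]

lemma purity_z (hnorm : N.Normal) (hdisc : DiscreteTopology N) {H : Subgroup (GJ d J)}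
    (hH : (∃ W : Submodule ℝ (Fin d → ℝ),
        (H : Set (GJ d J)) = {g : GJ d J | g.v ∈ W ∧ g.t = 0}) ∨
      (∃ W : Submodule ℝ (Fin d → ℝ), (∀ w ∈ W, J.mulVec w ∈ W) ∧ ∃ v₀ : Fin d → ℝ,
        (H : Set (GJ d J)) =
          {g : GJ d J | ∃ w ∈ W, ∃ t : ℝ, g = ⟨w + t • (matS (t • J)).mulVec v₀, t⟩}))
    {n : GJ d J} (hn : n ∈ N) {k : ℤ} (hk : k ≠ 0) (hnk : n ^ k ∈ H) : n ∈ H := by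
  obtain ⟨j, rfl | rfl⟩ := k.eq_nat_or_neg
  · rw [zpow_natCast] at hnk
    exact purity hnorm hdisc hH hn (by exact_mod_cast hk) hnk
  · rw [zpow_neg, zpow_natCast] at hnk
    have h2 : n ^ j ∈ H := by simpa using H.inv_mem hnk
    have hj : j ≠ 0 := by
      intro h; apply hk; rw [h]; simp
    exact purity hnorm hdisc hH hn hj h2

end Central

end GJ


/-- For a discrete normal subgroup `N` of `G(J)` and a connected subgroup `H` of `G(J)` (of
either of the two canonical forms), there is a subgroup `B ≤ N` such that `N` is the internal
direct product of `N ∩ H` and `B`. -/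
theorem GJ.discrete_subgroup_splits_along_connected (d : ℕ) (J : Matrix (Fin d) (Fin d) ℝ)
    (hJ : J ≠ 0) (N : Subgroup (GJ d J)) (hnorm : N.Normal) (hdisc : DiscreteTopology N)
    (H : Subgroup (GJ d J))
    (hH : (∃ W : Submodule ℝ (Fin d → ℝ),
        (H : Set (GJ d J)) = {g : GJ d J | g.v ∈ W ∧ g.t = 0}) ∨
      (∃ W : Submodule ℝ (Fin d → ℝ), (∀ w ∈ W, J.mulVec w ∈ W) ∧ ∃ v₀ : Fin d → ℝ,
        (H : Set (GJ d J)) =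
          {g : GJ d J | ∃ w ∈ W, ∃ t : ℝ, g = ⟨w + t • (matS (t • J)).mulVec v₀, t⟩})) :
    ∃ B : Subgroup (GJ d J), B ≤ N ∧
      ∀ n ∈ N, ∃! q : GJ d J × GJ d J, q.1 ∈ N ⊓ H ∧ q.2 ∈ B ∧ n = q.1 * q.2 := by
  classical
  set φ : GJ d J → (Fin d → ℝ) × ℝ := fun g => (g.v, g.t) with hφdef
  have φinj : Function.Injective φ := GJ.injective_vt
  have hmulφ : ∀ {x y : GJ d J}, x ∈ N → φ (x * y) = φ x + φ y := by
    intro x y hx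
    exact Prod.ext (GJ.mul_v_mem hnorm hdisc hx y) rfl
  have hinvφ : ∀ {x : GJ d J}, x ∈ N → φ x⁻¹ = -φ x := by
    intro x hx
    exact Prod.ext (GJ.inv_v_mem hnorm hdisc hx) rfl
  have hzpowφ : ∀ {x : GJ d J}, x ∈ N → ∀ k : ℤ, φ (x ^ k) = k • φ x := by
    intro x hx k
    exact Prod.ext (GJ.zpow_vt_mem hnorm hdisc hx k).1 (GJ.zpow_vt_mem hnorm hdisc hx k).2
  let L : AddSubgroup ((Fin d → ℝ) × ℝ) :=
    { carrier := φ '' N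
      add_mem' := by
        rintro a b ⟨x, hx, rfl⟩ ⟨y, hy, rfl⟩
        exact ⟨x * y, N.mul_mem hx hy, hmulφ hx⟩
      zero_mem' := ⟨1, N.one_mem, rfl⟩
      neg_mem' := by
        rintro a ⟨x, hx, rfl⟩
        exact ⟨x⁻¹, N.inv_mem hx, hinvφ hx⟩ }
  let M : AddSubgroup ((Fin d → ℝ) × ℝ) :=
    { carrier := φ '' (N ⊓ H : Subgroup (GJ d J))
      add_mem' := by
        rintro a b ⟨x, hx, rfl⟩ ⟨y, hy, rfl⟩
        exact ⟨x * y, (N ⊓ H).mul_mem hx hy,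
          hmulφ (Subgroup.mem_inf.1 hx).1⟩
      zero_mem' := ⟨1, (N ⊓ H).one_mem, rfl⟩
      neg_mem' := by
        rintro a ⟨x, hx, rfl⟩
        exact ⟨x⁻¹, (N ⊓ H).inv_mem hx, hinvφ (Subgroup.mem_inf.1 hx).1⟩ }
  let LZ : Submodule ℤ ((Fin d → ℝ) × ℝ) := L.toIntSubmodule
  let MZ : Submodule ℤ ((Fin d → ℝ) × ℝ) := M.toIntSubmodule
  have hLZ_mem : ∀ x : (Fin d → ℝ) × ℝ, x ∈ LZ ↔ ∃ g ∈ N, φ g = x := fun x => Iff.rfl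
  have hMZ_mem : ∀ x : (Fin d → ℝ) × ℝ, x ∈ MZ ↔ ∃ g ∈ N ⊓ H, φ g = x := fun x => Iff.rfl
  -- discreteness of LZ
  haveI hdiscL : DiscreteTopology LZ := by
    have hmkinj : Function.Injective (fun p : (Fin d → ℝ) × ℝ => (⟨p.1, p.2⟩ : GJ d J)) := by
      intro a b hab
      have h1 := congrArg GJ.v hab
      have h2 := congrArg GJ.t hab
      exact Prod.ext h1 h2
    haveI h1 : DiscreteTopology
        ((fun p : (Fin d → ℝ) × ℝ => (⟨p.1, p.2⟩ : GJ d J)) ⁻¹' (N : Set (GJ d J))) :=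
      DiscreteTopology.preimage_of_continuous_injective _
        (GJ.continuous_mk continuous_fst continuous_snd) hmkinj
    have hset : ((LZ : Set ((Fin d → ℝ) × ℝ))) =
        (fun p : (Fin d → ℝ) × ℝ => (⟨p.1, p.2⟩ : GJ d J)) ⁻¹' (N : Set (GJ d J)) := by
      ext p
      constructor
      · rintro ⟨x, hx, rfl⟩; exact hx
      · intro hp; exact ⟨⟨p.1, p.2⟩, hp, rfl⟩
    have h2 : DiscreteTopology ↥(LZ : Set ((Fin d → ℝ) × ℝ)) := by rw [hset]; exact h1
    exact h2
  haveI : Module.Finite ℤ LZ := inferInstance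
  haveI : Module.Free ℤ LZ := inferInstance
  let Mc : Submodule ℤ LZ := MZ.comap LZ.subtype
  haveI : Module.Finite ℤ (LZ ⧸ Mc) := inferInstance
  haveI : NoZeroSMulDivisors ℤ (LZ ⧸ Mc) := by
    refine ⟨fun {k x} hkx => ?_⟩
    by_cases hk : k = 0
    · exact Or.inl hk
    refine Or.inr ?_
    obtain ⟨xl, rfl⟩ := Mc.mkQ_surjective x
    rw [← map_smul, Submodule.mkQ_apply, Submodule.Quotient.mk_eq_zero] at hkx
    rw [Submodule.mkQ_apply, Submodule.Quotient.mk_eq_zero]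
    have hxm : k • (xl : (Fin d → ℝ) × ℝ) ∈ MZ := hkx
    obtain ⟨g, hgN, hφg⟩ := (hLZ_mem _).1 xl.2
    obtain ⟨p, hpNH, hφp⟩ := (hMZ_mem _).1 hxm
    have hpg : p = g ^ k := by
      apply φinj
      rw [hzpowφ hgN k, hφg, hφp]
    have hgk : g ^ k ∈ H := by
      rw [← hpg]; exact (Subgroup.mem_inf.1 hpNH).2
    have hgH : g ∈ H := GJ.purity_z hnorm hdisc hH hgN hk hgk
    show (xl : (Fin d → ℝ) × ℝ) ∈ MZ
    exact (hMZ_mem _).2 ⟨g, Subgroup.mem_inf.2 ⟨hgN, hgH⟩, hφg⟩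
  haveI : Module.Free ℤ (LZ ⧸ Mc) := inferInstance
  obtain ⟨s, hs⟩ := Module.projective_lifting_property Mc.mkQ
    (LinearMap.id : (LZ ⧸ Mc) →ₗ[ℤ] (LZ ⧸ Mc)) Mc.mkQ_surjective
  let BZ : Submodule ℤ ((Fin d → ℝ) × ℝ) := (LinearMap.range s).map LZ.subtype
  have hsq : ∀ q : LZ ⧸ Mc, Mc.mkQ (s q) = q := by
    intro q
    have := congrArg (fun f : (LZ ⧸ Mc) →ₗ[ℤ] (LZ ⧸ Mc) => f q) hs
    simpa using this
  have hdecomp : ∀ x ∈ LZ, ∃ mz ∈ MZ, ∃ bz ∈ BZ, x = mz + bz := by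
    intro x hx
    set xl : LZ := ⟨x, hx⟩ with hxl
    refine ⟨((xl - s (Mc.mkQ xl) : LZ) : (Fin d → ℝ) × ℝ), ?_, (s (Mc.mkQ xl) : (Fin d → ℝ) × ℝ),
      ⟨s (Mc.mkQ xl), ⟨Mc.mkQ xl, rfl⟩, rfl⟩, ?_⟩
    · have h2 : xl - s (Mc.mkQ xl) ∈ Mc := by
        rw [← Submodule.Quotient.mk_eq_zero, ← Submodule.mkQ_apply, map_sub, hsq, sub_self]
      exact h2
    · show x = ((xl - s (Mc.mkQ xl) : LZ) : (Fin d → ℝ) × ℝ) + _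
      rw [Submodule.coe_sub, sub_add_cancel]
  have hdisj : ∀ y, y ∈ MZ → y ∈ BZ → y = 0 := by
    intro y hyM hyB
    obtain ⟨b, ⟨q, rfl⟩, rfl⟩ := hyB
    have hbM : s q ∈ Mc := hyM
    have hq0 : q = 0 := by
      rw [← hsq q, Submodule.mkQ_apply, Submodule.Quotient.mk_eq_zero]
      exact hbM
    rw [hq0, map_zero]
    rfl
  let B : Subgroup (GJ d J) :=
    { carrier := {g | g ∈ N ∧ φ g ∈ BZ}
      mul_mem' := fun {a b} ha hb => ⟨N.mul_mem ha.1 hb.1, by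
        rw [hmulφ ha.1]; exact BZ.add_mem ha.2 hb.2⟩
      one_mem' := ⟨N.one_mem, BZ.zero_mem⟩
      inv_mem' := fun {a} ha => ⟨N.inv_mem ha.1, by
        rw [hinvφ ha.1]; exact BZ.neg_mem ha.2⟩ }
  refine ⟨B, fun g hg => hg.1, ?_⟩
  intro n hn
  obtain ⟨mz, hmz, bz, hbz, hsum⟩ := hdecomp (φ n) ((hLZ_mem _).2 ⟨n, hn, rfl⟩)
  obtain ⟨p, hpNH, hφp⟩ := (hMZ_mem _).1 hmz
  have hbzL : bz ∈ LZ := by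
    obtain ⟨b, _, rfl⟩ := hbz
    exact b.2
  obtain ⟨gb, hgbN, hφgb⟩ := (hLZ_mem _).1 hbzL
  have hgbB : gb ∈ B := ⟨hgbN, by rw [hφgb]; exact hbz⟩
  have hpN : p ∈ N := (Subgroup.mem_inf.1 hpNH).1
  have hmain : n = p * gb := by
    apply φinj
    rw [hmulφ hpN, hφp, hφgb, hsum]
  refine ⟨(p, gb), ⟨hpNH, hgbB, hmain⟩, ?_⟩
  rintro ⟨p', gb'⟩ ⟨hp', hgb', heq⟩
  have hp'N : p' ∈ N := (Subgroup.mem_inf.1 hp').1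
  have hgb'N : gb' ∈ N := hgb'.1
  have hsum' : φ p' + φ gb' = φ p + φ gb := by
    rw [← hmulφ hp'N, ← hmulφ hpN, ← heq, ← hmain]
  have h1 : φ p' - φ p ∈ MZ := MZ.sub_mem ((hMZ_mem _).2 ⟨p', hp', rfl⟩)
    ((hMZ_mem _).2 ⟨p, hpNH, rfl⟩)
  have h2 : φ p' - φ p ∈ BZ := by
    have h3 : φ p' - φ p = φ gb - φ gb' := by linear_combination hsum'
    rw [h3]
    refine BZ.sub_mem ?_ hgb'.2
    rw [hφgb]; exact hbz
  have h0 : φ p' - φ p = 0 := hdisj _ h1 h2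
  have hpp : p' = p := φinj (sub_eq_zero.1 h0)
  have hgg : gb' = gb := by
    apply φinj
    rw [hpp] at hsum'
    exact add_left_cancel hsum'
  exact Prod.ext hpp hgg
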